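/- Static safety invariant preservation under acceleration: assume 0 ≤ v_r, 0 ≤ A, 0 < b, 0 < ε, and ‖p_r − p_o‖ > v_r²/(2b) + (A/b+1)(A ε²/2 + ε v_r). If the robot accelerates with a ≤ A for time t ∈ [0, ε] along any trajectory with speed v(s) = v_r + a s ≥ 0, then ‖p(t) − p_o‖ > (v_r + a t)²/(2b). -/

import Mathlib

theorem static_safety_invariant_accel
    (p_r p_o : EuclideanSpace ℝ (Fin 2)) (v_r A b ε a : ℝ)
    (p : ℝ → EuclideanSpace ℝ (Fin 2))
    (hv : 0 ≤ v_r) (hA : 0 ≤ A) (hb : 0 < b) (hε : 0 < ε)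
    (ha : a ≤ A)
    (hspeed : ∀ s ∈ Set.Icc (0:ℝ) ε, 0 ≤ v_r + a * s)
    (hinv : ‖p_r - p_o‖ > v_r ^ 2 / (2 * b) + (A / b + 1) * (A * ε ^ 2 / 2 + ε * v_r))
    (htraj : ∀ t ∈ Set.Icc (0:ℝ) ε, ‖p t - p_r‖ ≤ v_r * t + a / 2 * t ^ 2) :
    ∀ t ∈ Set.Icc (0:ℝ) ε, ‖p t - p_o‖ > (v_r + a * t) ^ 2 / (2 * b) := by
  intro t ht
  obtain ⟨ht0, htε⟩ := ht
  have hd := htraj t ⟨ht0, htε⟩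
  have hvt := hspeed t ⟨ht0, htε⟩
  have htri : ‖p_r - p_o‖ ≤ ‖p_r - p t‖ + ‖p t - p_o‖ := norm_sub_le_norm_sub_add_norm_sub _ _ _
  rw [norm_sub_rev p_r (p t)] at htri
  have key : v_r * t + a / 2 * t ^ 2 + (v_r + a * t) ^ 2 / (2 * b)
      ≤ v_r ^ 2 / (2 * b) + (A / b + 1) * (A * ε ^ 2 / 2 + ε * v_r) := by
    have hb2 : (0:ℝ) < 2 * b := by linarith
    rw [div_add' _ _ _ hb2.ne']
    rw [show v_r * t + a / 2 * t ^ 2 + (v_r + a * t) ^ 2 / (2 * b) = ((v_r * t + a / 2 * t ^ 2) * (2 * b) + (v_r + a * t) ^ 2) / (2 * b) from by field_simp]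
    rw [div_le_div_iff_of_pos_right hb2]
    rw [show (v_r ^ 2 + (A / b + 1) * (A * ε ^ 2 / 2 + ε * v_r) * (2 * b)) = v_r ^ 2 + (A + b) * (A * ε ^ 2 + 2 * (ε * v_r)) from by field_simp]
    have h1 : t * v_r ≤ ε * v_r := by nlinarith
    rcases le_or_gt a 0 with hneg | hpos
    · nlinarith [mul_nonneg (mul_nonneg (neg_nonneg.2 hneg) ht0) hvt,
        mul_nonneg (mul_nonneg (neg_nonneg.2 hneg) ht0) (mul_nonneg ht0 hb.le),
        mul_nonneg (mul_nonneg (neg_nonneg.2 hneg) ht0) hv,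
        mul_nonneg hA (sq_nonneg ε), mul_nonneg hA (mul_nonneg hε.le hv),
        mul_nonneg (mul_nonneg hA hA) (sq_nonneg ε),
        mul_nonneg hb.le (sq_nonneg ε), mul_nonneg hA hv]
    · nlinarith [mul_nonneg hpos.le (mul_nonneg ht0 (mul_nonneg (sub_nonneg.2 htε) hb.le)),
        mul_nonneg (mul_nonneg hpos.le hpos.le) (mul_nonneg (sub_nonneg.2 htε) (by linarith : (0:ℝ) ≤ ε + t)),
        mul_nonneg (mul_nonneg (sub_nonneg.2 ha) hpos.le) (sq_nonneg ε),
        mul_nonneg (mul_nonneg (sub_nonneg.2 ha) hv) (mul_nonneg hε.le (by norm_num : (0:ℝ) ≤ 2)),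
        mul_nonneg (mul_nonneg (sub_nonneg.2 ha) (add_nonneg hA hpos.le)) (sq_nonneg ε),
        mul_nonneg (mul_nonneg (sub_nonneg.2 ha) hb.le) (sq_nonneg ε),
        mul_nonneg hpos.le (mul_nonneg (sub_nonneg.2 htε) hv),
        mul_le_mul_of_nonneg_left h1 hb.le]
  linarith
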